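/- There exists a constant C > 0 such that for every natural number N, every t > 0 and every continuous function ψ : [0,1] → ℝ, ( ∫₀¹ | Σ_{k=1}^N kπ · e^{−t k²π²} · ( ∫₀¹ ψ(y)² cos(kπy) dy ) · sin(kπx) |⁴ dx )^{1/4} ≤ C · t^{−5/8} · ( ∫₀¹ ψ(y)⁴ dy )^{1/2}. -/

import Mathlib

open Real intervalIntegral Finset Set

lemma intCos (c : ℝ) (hc : c ≠ 0) : ∫ y in (0:ℝ)..1, Real.cos (c*y) = Real.sin c / c := by
  rw [intervalIntegral.integral_comp_mul_left (fun x => Real.cos x) hc]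
  simp [integral_cos, div_eq_inv_mul]

lemma intCosZ (m : ℤ) (hm : m ≠ 0) : ∫ y in (0:ℝ)..1, Real.cos (m*Real.pi*y) = 0 := by
  rw [intCos (m*Real.pi) (by
    exact mul_ne_zero (Int.cast_ne_zero.mpr hm) Real.pi_ne_zero)]
  rw [Real.sin_int_mul_pi]
  simp

lemma intCosZ' (m : ℤ) : ∫ y in (0:ℝ)..1, Real.cos ((m:ℝ)*Real.pi*y) = if m = 0 then 1 else 0 := by
  by_cases h : m = 0
  · simp [h]
  · simp [h, intCosZ m h]

lemma cc_int (c : ℝ) : IntervalIntegrable (fun y => Real.cos (c*y)) MeasureTheory.volume 0 1 :=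
  (Real.continuous_cos.comp (continuous_const.mul continuous_id)).intervalIntegrable 0 1

lemma coscos (k j : ℕ) : (∫ y in (0:ℝ)..1,
    Real.cos (((k:ℝ)+1)*Real.pi*y) * Real.cos (((j:ℝ)+1)*Real.pi*y)) = if k = j then 1/2 else 0 := by
  have h1 : Set.EqOn (fun y : ℝ => Real.cos (((k:ℝ)+1)*Real.pi*y) * Real.cos (((j:ℝ)+1)*Real.pi*y))
      (fun y : ℝ => (Real.cos (((((k:ℤ)-(j:ℤ)):ℤ):ℝ)*Real.pi*y) + Real.cos (((((k:ℤ)+(j:ℤ)+2):ℤ):ℝ)*Real.pi*y))/2)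
      (Set.uIcc 0 1) := by
    intro y _
    have key : ∀ (x z : ℝ), Real.cos x * Real.cos z = (Real.cos (x - z) + Real.cos (x + z))/2 := by
      intro x z; rw [Real.cos_sub, Real.cos_add]; ring
    simp only [key]
    push_cast
    ring_nf
  rw [intervalIntegral.integral_congr h1]
  have i1 : IntervalIntegrable (fun y : ℝ => Real.cos (((((k:ℤ)-(j:ℤ)):ℤ):ℝ)*Real.pi*y)) MeasureTheory.volume 0 1 := by
    simpa [mul_assoc] using cc_int (((((k:ℤ)-(j:ℤ)):ℤ):ℝ)*Real.pi)
  have i2 : IntervalIntegrable (fun y : ℝ => Real.cos (((((k:ℤ)+(j:ℤ)+2):ℤ):ℝ)*Real.pi*y)) MeasureTheory.volume 0 1 := by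
    simpa [mul_assoc] using cc_int (((((k:ℤ)+(j:ℤ)+2):ℤ):ℝ)*Real.pi)
  rw [intervalIntegral.integral_div, intervalIntegral.integral_add i1 i2,
    intCosZ' ((k:ℤ)-(j:ℤ)), intCosZ' ((k:ℤ)+(j:ℤ)+2)]
  have h2 : ((k:ℤ)+(j:ℤ)+2) ≠ 0 := by omega
  by_cases h : k = j
  · have h3 : ((j:ℤ)+(j:ℤ)+2) ≠ 0 := by omega
    simp [h, h3]
  · have : ((k:ℤ)-(j:ℤ)) ≠ 0 := by omega
    simp [h, this, h2]

lemma sinsin (k j : ℕ) : (∫ y in (0:ℝ)..1,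
    Real.sin (((k:ℝ)+1)*Real.pi*y) * Real.sin (((j:ℝ)+1)*Real.pi*y)) = if k = j then 1/2 else 0 := by
  have h1 : Set.EqOn (fun y : ℝ => Real.sin (((k:ℝ)+1)*Real.pi*y) * Real.sin (((j:ℝ)+1)*Real.pi*y))
      (fun y : ℝ => (Real.cos (((((k:ℤ)-(j:ℤ)):ℤ):ℝ)*Real.pi*y) - Real.cos (((((k:ℤ)+(j:ℤ)+2):ℤ):ℝ)*Real.pi*y))/2)
      (Set.uIcc 0 1) := by
    intro y _
    have key : ∀ (x z : ℝ), Real.sin x * Real.sin z = (Real.cos (x - z) - Real.cos (x + z))/2 := by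
      intro x z; rw [Real.cos_sub, Real.cos_add]; ring
    simp only [key]
    push_cast
    ring_nf
  rw [intervalIntegral.integral_congr h1]
  have i1 : IntervalIntegrable (fun y : ℝ => Real.cos (((((k:ℤ)-(j:ℤ)):ℤ):ℝ)*Real.pi*y)) MeasureTheory.volume 0 1 := by
    simpa [mul_assoc] using cc_int (((((k:ℤ)-(j:ℤ)):ℤ):ℝ)*Real.pi)
  have i2 : IntervalIntegrable (fun y : ℝ => Real.cos (((((k:ℤ)+(j:ℤ)+2):ℤ):ℝ)*Real.pi*y)) MeasureTheory.volume 0 1 := by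
    simpa [mul_assoc] using cc_int (((((k:ℤ)+(j:ℤ)+2):ℤ):ℝ)*Real.pi)
  rw [intervalIntegral.integral_div, intervalIntegral.integral_sub i1 i2,
    intCosZ' ((k:ℤ)-(j:ℤ)), intCosZ' ((k:ℤ)+(j:ℤ)+2)]
  have h2 : ((k:ℤ)+(j:ℤ)+2) ≠ 0 := by omega
  by_cases h : k = j
  · have h3 : ((j:ℤ)+(j:ℤ)+2) ≠ 0 := by omega
    simp [h, h3]
  · have : ((k:ℤ)-(j:ℤ)) ≠ 0 := by omega
    simp [h, this, h2]

lemma gauss_sum (A : ℝ) (hA : 0 < A) (N : ℕ) :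
    ∑ k ∈ Finset.range N, Real.exp (-A*((k:ℝ)+1)^2) ≤ Real.sqrt (Real.pi/A) / 2 := by
  have hf : AntitoneOn (fun x : ℝ => Real.exp (-A*x^2)) (Set.Icc 0 (0 + (N:ℝ))) := by
    intro x hx y hy hxy
    simp only
    apply Real.exp_le_exp.mpr
    have hsq : x^2 ≤ y^2 := pow_le_pow_left₀ hx.1 hxy 2
    nlinarith [mul_le_mul_of_nonneg_left hsq hA.le]
  have h1 := hf.sum_le_integral
  have h2 : ∑ k ∈ Finset.range N, Real.exp (-A*((k:ℝ)+1)^2)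
      = ∑ i ∈ Finset.range N, (fun x : ℝ => Real.exp (-A*x^2)) (0 + ((i:ℕ)+1 : ℕ)) := by
    apply Finset.sum_congr rfl; intro i _; push_cast; ring_nf
  rw [h2]
  refine le_trans h1 ?_
  rw [zero_add]
  have hint : MeasureTheory.IntegrableOn (fun x : ℝ => Real.exp (-A*x^2)) (Set.Ioi 0) := by
    exact (integrable_exp_neg_mul_sq hA).integrableOn
  have h3 : (∫ x in (0:ℝ)..(N:ℝ), Real.exp (-A*x^2))
      = ∫ x in Set.Ioc (0:ℝ) (N:ℝ), Real.exp (-A*x^2) := by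
    rw [intervalIntegral.integral_of_le (by positivity)]
  rw [h3, ← integral_gaussian_Ioi A]
  apply MeasureTheory.setIntegral_mono_set hint
  · filter_upwards with x using (Real.exp_pos _).le
  · filter_upwards with x hx using hx.1

lemma ve (v : ℝ) : v * Real.exp (-v) ≤ 1 := by
  have h := Real.add_one_le_exp v
  have h2 : v * Real.exp (-v) ≤ Real.exp v * Real.exp (-v) :=
    mul_le_mul_of_nonneg_right (by linarith) (Real.exp_pos _).le
  rwa [← Real.exp_add, add_neg_cancel, Real.exp_zero] at h2

lemma sum_orth (N : ℕ) (d : ℕ → ℝ) (e : ℕ → ℝ → ℝ)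
    (hcont : ∀ k, Continuous (e k))
    (horth : ∀ k j : ℕ, (∫ y in (0:ℝ)..1, e k y * e j y) = if k = j then 1/2 else 0) :
    (∫ y in (0:ℝ)..1, (∑ k ∈ Finset.range N, d k * e k y)^2)
      = (1/2) * ∑ k ∈ Finset.range N, (d k)^2 := by
  have h1 : ∀ y : ℝ, (∑ k ∈ Finset.range N, d k * e k y)^2
      = ∑ k ∈ Finset.range N, ∑ j ∈ Finset.range N, (d k * d j) * (e k y * e j y) := by
    intro y; rw [sq, Finset.sum_mul_sum]
    exact Finset.sum_congr rfl fun k _ => Finset.sum_congr rfl fun j _ => by ring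
  have int2 : ∀ k j : ℕ, IntervalIntegrable (fun y => (d k * d j) * (e k y * e j y))
      MeasureTheory.volume 0 1 :=
    fun k j => (continuous_const.mul ((hcont k).mul (hcont j))).intervalIntegrable 0 1
  simp only [h1]
  rw [intervalIntegral.integral_finset_sum
      (f := fun k y => ∑ j ∈ Finset.range N, (d k * d j) * (e k y * e j y))
      (fun k _ => (continuous_finset_sum _ fun j _ =>
      continuous_const.mul ((hcont k).mul (hcont j))).intervalIntegrable 0 1)]
  have h2 : ∀ k ∈ Finset.range N,
      (∫ y in (0:ℝ)..1, ∑ j ∈ Finset.range N, (d k * d j) * (e k y * e j y))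
        = (d k)^2 / 2 := by
    intro k hk
    rw [intervalIntegral.integral_finset_sum (fun j _ => int2 k j)]
    have h3 : ∀ j ∈ Finset.range N,
        (∫ y in (0:ℝ)..1, (d k * d j) * (e k y * e j y))
          = if k = j then (d k)^2/2 else 0 := by
      intro j _
      rw [intervalIntegral.integral_const_mul, horth k j]
      by_cases h : k = j
      · subst h; simp; ring
      · simp [h]
    rw [Finset.sum_congr rfl h3, Finset.sum_ite_eq, if_pos hk]
  rw [Finset.sum_congr rfl h2, Finset.mul_sum]
  exact Finset.sum_congr rfl fun k _ => by ring

lemma bessel (N : ℕ) (f : ℝ → ℝ) (hf : ContinuousOn f (Set.uIcc 0 1)) :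
    ∑ k ∈ Finset.range N, (∫ y in (0:ℝ)..1, f y * Real.cos (((k:ℝ)+1)*Real.pi*y))^2
      ≤ (1/2) * ∫ y in (0:ℝ)..1, (f y)^2 := by
  set c : ℕ → ℝ := fun k => ∫ y in (0:ℝ)..1, f y * Real.cos (((k:ℝ)+1)*Real.pi*y) with hc
  set S : ℝ → ℝ := fun y => ∑ k ∈ Finset.range N, (2 * c k) * Real.cos (((k:ℝ)+1)*Real.pi*y) with hS
  have hcos : ∀ k : ℕ, Continuous (fun y : ℝ => Real.cos (((k:ℝ)+1)*Real.pi*y)) :=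
    fun k => Real.continuous_cos.comp (continuous_const.mul continuous_id)
  have hScont : Continuous S := continuous_finset_sum _ fun k _ => continuous_const.mul (hcos k)
  have hfint : ∀ g : ℝ → ℝ, Continuous g →
      IntervalIntegrable (fun y => f y * g y) MeasureTheory.volume 0 1 :=
    fun g hg => (hf.mul (hg.continuousOn)).intervalIntegrable
  have hf2 : IntervalIntegrable (fun y => (f y)^2) MeasureTheory.volume 0 1 := by
    simpa only [sq, Pi.mul_def] using ((hf.mul hf).intervalIntegrable : IntervalIntegrable _ MeasureTheory.volume 0 1)
  have hS2int : IntervalIntegrable (fun y => (S y)^2) MeasureTheory.volume 0 1 := by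
    simpa only [sq, Pi.mul_def] using ((hScont.mul hScont).intervalIntegrable 0 1)
  have hfS : (∫ y in (0:ℝ)..1, f y * S y) = 2 * ∑ k ∈ Finset.range N, (c k)^2 := by
    have e1 : ∀ y : ℝ, f y * S y
        = ∑ k ∈ Finset.range N, (2 * c k) * (f y * Real.cos (((k:ℝ)+1)*Real.pi*y)) := by
      intro y; rw [hS, Finset.mul_sum]
      exact Finset.sum_congr rfl fun k _ => by ring
    simp only [e1]
    rw [intervalIntegral.integral_finset_sum
      (f := fun k y => (2 * c k) * (f y * Real.cos (((k:ℝ)+1)*Real.pi*y))) (fun k _ =>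
      ((hf.mul (hcos k).continuousOn).intervalIntegrable.const_mul _))]
    simp only [intervalIntegral.integral_const_mul]
    rw [Finset.mul_sum]
    exact Finset.sum_congr rfl fun k _ => by
      show 2 * c k * c k = 2 * (c k)^2
      ring
  have hS2 : (∫ y in (0:ℝ)..1, (S y)^2) = 2 * ∑ k ∈ Finset.range N, (c k)^2 := by
    rw [hS]
    rw [sum_orth N (fun k => 2 * c k) _ hcos coscos, Finset.mul_sum, Finset.mul_sum]
    exact Finset.sum_congr rfl fun k _ => by ring
  have hpos : (0:ℝ) ≤ ∫ y in (0:ℝ)..1, (f y - S y)^2 := by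
    apply intervalIntegral.integral_nonneg (by norm_num)
    intro y _; positivity
  have hexp : (∫ y in (0:ℝ)..1, (f y - S y)^2)
      = (∫ y in (0:ℝ)..1, (f y)^2) - 2 * (∫ y in (0:ℝ)..1, f y * S y)
        + ∫ y in (0:ℝ)..1, (S y)^2 := by
    have e2 : ∀ y : ℝ, (f y - S y)^2 = (f y)^2 - 2 * (f y * S y) + (S y)^2 := fun y => by ring
    simp only [e2]
    rw [intervalIntegral.integral_add (IntervalIntegrable.sub hf2
        ((hfint S hScont).const_mul 2)) hS2int,
      intervalIntegral.integral_sub hf2 ((hfint S hScont).const_mul 2),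
      intervalIntegral.integral_const_mul]
  rw [hexp, hfS, hS2] at hpos
  linarith

lemma final_numeric (t Q : ℝ) (ht : 0 < t) (hQ : 0 ≤ Q) :
    (Q^2/(32*(t^2*Real.sqrt t))) ^ ((1:ℝ)/4) ≤ t ^ (-(5:ℝ)/8) * Q ^ ((1:ℝ)/2) := by
  have hts : t^2 * Real.sqrt t = t ^ ((5:ℝ)/2) := by
    rw [Real.sqrt_eq_rpow, show (5:ℝ)/2 = 2 + 1/2 by norm_num, Real.rpow_add ht]
    norm_num [Real.rpow_natCast]
  have h1 : Q^2/(32*(t^2*Real.sqrt t)) ≤ Q^2 * t ^ (-(5:ℝ)/2) := by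
    rw [hts, show (-(5:ℝ)/2) = -((5:ℝ)/2) by norm_num, Real.rpow_neg ht.le, div_eq_mul_inv, mul_inv]
    have h32 : (32:ℝ)⁻¹ ≤ 1 := by norm_num
    have hp : 0 < t ^ ((5:ℝ)/2) := Real.rpow_pos_of_pos ht _
    calc Q^2 * ((32:ℝ)⁻¹ * (t ^ ((5:ℝ)/2))⁻¹)
        ≤ Q^2 * (1 * (t ^ ((5:ℝ)/2))⁻¹) := by
          apply mul_le_mul_of_nonneg_left _ (sq_nonneg Q)
          apply mul_le_mul_of_nonneg_right h32 (by positivity)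
      _ = Q^2 * (t ^ ((5:ℝ)/2))⁻¹ := by ring
  refine le_trans (Real.rpow_le_rpow (by positivity) h1 (by norm_num)) ?_
  rw [Real.mul_rpow (sq_nonneg Q) (Real.rpow_nonneg ht.le _)]
  rw [← Real.rpow_natCast Q 2, ← Real.rpow_mul hQ, ← Real.rpow_mul ht.le]
  norm_num
  rw [mul_comm]

lemma main_aux (t : ℝ) (ht : 0 < t) (N : ℕ) (a c : ℕ → ℝ) (Q : ℝ) (hQ : 0 ≤ Q)
    (hsupa : ∀ k, (a k)^2 ≤ 1/(2*t))
    (hSa : ∑ k ∈ Finset.range N, (a k)^2 ≤ 1/(2*(t*Real.sqrt t)))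
    (hbes : ∑ k ∈ Finset.range N, (c k)^2 ≤ Q/2) :
    (∫ x in (0:ℝ)..1,
        |∑ k ∈ Finset.range N, a k * c k * Real.sin (((k:ℝ)+1)*Real.pi*x)| ^ 4) ^ ((1:ℝ)/4)
      ≤ t ^ (-(5:ℝ)/8) * Q ^ ((1:ℝ)/2) := by
  obtain ⟨g, hgdef⟩ : ∃ g : ℝ → ℝ,
      g = fun x => ∑ k ∈ Finset.range N, a k * c k * Real.sin (((k:ℝ)+1)*Real.pi*x) :=
    ⟨_, rfl⟩
  have hsin : ∀ k : ℕ, Continuous (fun x : ℝ => Real.sin (((k:ℝ)+1)*Real.pi*x)) :=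
    fun k => Real.continuous_sin.comp (continuous_const.mul continuous_id)
  have hgc : Continuous g := by
    rw [hgdef]; exact continuous_finset_sum _ fun k _ => continuous_const.mul (hsin k)
  set M : ℝ := ∑ k ∈ Finset.range N, |a k * c k| with hM
  have hMnn : 0 ≤ M := Finset.sum_nonneg fun k _ => abs_nonneg _
  have hMg : ∀ x : ℝ, |g x| ≤ M := by
    intro x
    rw [hgdef]
    refine le_trans (Finset.abs_sum_le_sum_abs _ _) (Finset.sum_le_sum fun k _ => ?_)
    rw [abs_mul]
    exact mul_le_of_le_one_right (abs_nonneg _)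
      (abs_le.mpr ⟨Real.neg_one_le_sin _, Real.sin_le_one _⟩)
  have hg2 : (∫ x in (0:ℝ)..1, (g x)^2) = (1/2) * ∑ k ∈ Finset.range N, (a k * c k)^2 := by
    rw [hgdef]; exact sum_orth N (fun k => a k * c k) _ hsin sinsin
  have hcnn : (0:ℝ) ≤ ∑ k ∈ Finset.range N, (c k)^2 :=
    Finset.sum_nonneg fun k _ => sq_nonneg _
  have hsb2 : ∑ k ∈ Finset.range N, (a k * c k)^2 ≤ (1/(2*t)) * (Q/2) := by
    calc ∑ k ∈ Finset.range N, (a k * c k)^2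
        ≤ ∑ k ∈ Finset.range N, (1/(2*t)) * (c k)^2 := by
          refine Finset.sum_le_sum fun k _ => ?_
          rw [mul_pow]
          exact mul_le_mul_of_nonneg_right (hsupa k) (sq_nonneg _)
      _ = (1/(2*t)) * ∑ k ∈ Finset.range N, (c k)^2 := by rw [Finset.mul_sum]
      _ ≤ (1/(2*t)) * (Q/2) :=
          mul_le_mul_of_nonneg_left hbes (by positivity)
  have hM2 : M^2 ≤ (1/(2*(t*Real.sqrt t))) * (Q/2) := by
    have cs := Finset.sum_mul_sq_le_sq_mul_sq (Finset.range N) (fun k => |a k|) (fun k => |c k|)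
    simp only [sq_abs, ← abs_mul] at cs
    calc M^2 ≤ (∑ k ∈ Finset.range N, (a k)^2) * (∑ k ∈ Finset.range N, (c k)^2) := cs
      _ ≤ (1/(2*(t*Real.sqrt t))) * (Q/2) := by
          apply mul_le_mul hSa hbes hcnn (by positivity)
  have hintg2 : IntervalIntegrable (fun x => M^2 * (g x)^2) MeasureTheory.volume 0 1 :=
    (continuous_const.mul (hgc.mul hgc |>.congr fun x => (sq (g x)) ▸ rfl)).intervalIntegrable 0 1
  have hint4 : (∫ x in (0:ℝ)..1, |g x|^4) ≤ M^2 * ∫ x in (0:ℝ)..1, (g x)^2 := by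
    rw [← intervalIntegral.integral_const_mul]
    apply intervalIntegral.integral_mono_on (by norm_num)
    · exact ((hgc.abs.pow 4)).intervalIntegrable 0 1
    · exact hintg2
    · intro x _
      have h1 : (g x)^2 ≤ M^2 := by
        have := hMg x
        nlinarith [abs_nonneg (g x), sq_abs (g x)]
      have h2 : |g x|^4 = (g x)^2 * (g x)^2 := by
        rw [← sq_abs]; ring
      rw [h2]
      exact mul_le_mul_of_nonneg_right h1 (sq_nonneg _)
  have hfinal : (∫ x in (0:ℝ)..1, |g x|^4) ≤ Q^2/(32*(t^2*Real.sqrt t)) := by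
    have hb : M^2 * ∫ x in (0:ℝ)..1, (g x)^2
        ≤ ((1/(2*(t*Real.sqrt t))) * (Q/2)) * ((1/2) * ((1/(2*t)) * (Q/2))) := by
      rw [hg2]
      apply mul_le_mul hM2 _ _ (by positivity)
      · exact mul_le_mul_of_nonneg_left hsb2 (by norm_num)
      · have : (0:ℝ) ≤ ∑ k ∈ Finset.range N, (a k * c k)^2 :=
          Finset.sum_nonneg fun k _ => sq_nonneg _
        positivity
    refine le_trans hint4 (le_trans hb (le_of_eq ?_))
    have hst : Real.sqrt t > 0 := Real.sqrt_pos.mpr ht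
    field_simp
    ring
  have hrw : ∀ x : ℝ, |∑ k ∈ Finset.range N, a k * c k * Real.sin (((k:ℝ)+1)*Real.pi*x)| ^ 4
      = |g x|^4 := fun x => by rw [hgdef]
  simp only [hrw]
  refine le_trans (Real.rpow_le_rpow ?_ hfinal (by norm_num)) (final_numeric t Q ht hQ)
  apply intervalIntegral.integral_nonneg (by norm_num)
  intro x _; positivity

/-- `‖P_N S(t) B(ψ)‖_{L⁴(0,1)} ≤ C t^{-5/8} ‖ψ‖²_{L⁴(0,1)}` in explicit spectral form. -/
theorem stmt16 :
    ∃ C : ℝ, 0 < C ∧ ∀ (N : ℕ) (t : ℝ), 0 < t → ∀ ψ : ℝ → ℝ,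
      ContinuousOn ψ (Set.Icc 0 1) →
      (∫ x in (0:ℝ)..1,
        |∑ k ∈ Finset.range N,
          ((((k:ℝ)+1) * Real.pi) * Real.exp (-t * (((k:ℝ)+1)^2 * Real.pi^2))) *
            (∫ y in (0:ℝ)..1, (ψ y)^2 * Real.cos (((k:ℝ)+1) * Real.pi * y)) *
            Real.sin (((k:ℝ)+1) * Real.pi * x)| ^ 4) ^ ((1:ℝ)/4)
      ≤ C * t ^ (-(5:ℝ)/8) * (∫ y in (0:ℝ)..1, (ψ y)^4) ^ ((1:ℝ)/2) := by
  refine ⟨1, one_pos, ?_⟩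
  intro N t ht ψ hψ
  rw [one_mul]
  have hψ2 : ContinuousOn (fun y => (ψ y)^2) (Set.uIcc 0 1) := by
    rw [Set.uIcc_of_le (by norm_num : (0:ℝ) ≤ 1)]
    exact hψ.pow 2
  have hQ : 0 ≤ ∫ y in (0:ℝ)..1, (ψ y)^4 :=
    intervalIntegral.integral_nonneg (by norm_num) (fun y _ => by positivity)
  have hbes := bessel N (fun y => (ψ y)^2) hψ2
  have h44 : (∫ y in (0:ℝ)..1, ((ψ y)^2)^2) = ∫ y in (0:ℝ)..1, (ψ y)^4 := by
    apply intervalIntegral.integral_congr; intro y _; ring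
  rw [h44] at hbes
  -- sup bound
  have hsupa : ∀ k : ℕ,
      ((((k:ℝ)+1) * Real.pi) * Real.exp (-t * (((k:ℝ)+1)^2 * Real.pi^2)))^2 ≤ 1/(2*t) := by
    intro k
    set L : ℝ := ((k:ℝ)+1)^2 * Real.pi^2 with hL
    have hLpos : 0 < L := by positivity
    have hexp : ((((k:ℝ)+1) * Real.pi) * Real.exp (-t * L))^2 = L * Real.exp (-(2*t*L)) := by
      calc ((((k:ℝ)+1) * Real.pi) * Real.exp (-t * L))^2
          = (((k:ℝ)+1)^2 * Real.pi^2) * (Real.exp (-t*L) * Real.exp (-t*L)) := by ring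
        _ = L * Real.exp (-t*L + -t*L) := by rw [Real.exp_add, hL]
        _ = L * Real.exp (-(2*t*L)) := by ring_nf
    rw [hexp, le_div_iff₀ (by positivity : (0:ℝ) < 2*t)]
    have heq : L * Real.exp (-(2*t*L)) * (2*t) = (2*t*L) * Real.exp (-(2*t*L)) := by ring
    rw [heq]
    exact ve _
  -- sum bound
  have hSa : ∑ k ∈ Finset.range N,
      ((((k:ℝ)+1) * Real.pi) * Real.exp (-t * (((k:ℝ)+1)^2 * Real.pi^2)))^2
        ≤ 1/(2*(t*Real.sqrt t)) := by
    have step : ∀ k ∈ Finset.range N,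
        ((((k:ℝ)+1) * Real.pi) * Real.exp (-t * (((k:ℝ)+1)^2 * Real.pi^2)))^2
          ≤ (1/t) * Real.exp (-(t*Real.pi^2)*((k:ℝ)+1)^2) := by
      intro k _
      set L : ℝ := ((k:ℝ)+1)^2 * Real.pi^2 with hL
      have hLpos : 0 < L := by positivity
      have hexp : ((((k:ℝ)+1) * Real.pi) * Real.exp (-t * L))^2
          = (L * Real.exp (-(t*L))) * Real.exp (-(t*L)) := by
        calc ((((k:ℝ)+1) * Real.pi) * Real.exp (-t * L))^2
            = (((k:ℝ)+1)^2 * Real.pi^2) * (Real.exp (-t*L) * Real.exp (-t*L)) := by ring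
          _ = (L * Real.exp (-(t*L))) * Real.exp (-(t*L)) := by rw [hL]; ring_nf
      rw [hexp]
      have h1 : L * Real.exp (-(t*L)) ≤ 1/t := by
        rw [le_div_iff₀ ht]
        have heq : L * Real.exp (-(t*L)) * t = (t*L) * Real.exp (-(t*L)) := by ring
        rw [heq]
        exact ve _
      have h2 : Real.exp (-(t*L)) = Real.exp (-(t*Real.pi^2)*((k:ℝ)+1)^2) := by
        rw [hL]; ring_nf
      calc (L * Real.exp (-(t*L))) * Real.exp (-(t*L))
          ≤ (1/t) * Real.exp (-(t*L)) := mul_le_mul_of_nonneg_right h1 (Real.exp_pos _).le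
        _ = (1/t) * Real.exp (-(t*Real.pi^2)*((k:ℝ)+1)^2) := by rw [h2]
    refine le_trans (Finset.sum_le_sum step) ?_
    rw [← Finset.mul_sum]
    have hg := gauss_sum (t*Real.pi^2) (by positivity) N
    refine le_trans (mul_le_mul_of_nonneg_left hg (by positivity)) ?_
    have hstpos : 0 < Real.sqrt t := Real.sqrt_pos.mpr ht
    have e1 : Real.pi/(t*Real.pi^2) = 1/(t*Real.pi) := by
      field_simp
    have hle : (1:ℝ)/(t*Real.pi) ≤ 1/t := by
      apply one_div_le_one_div_of_le ht
      nlinarith [Real.pi_gt_three]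
    have hs1 : Real.sqrt (Real.pi/(t*Real.pi^2)) ≤ (Real.sqrt t)⁻¹ :=
      calc Real.sqrt (Real.pi/(t*Real.pi^2)) = Real.sqrt (1/(t*Real.pi)) := by rw [e1]
        _ ≤ Real.sqrt (1/t) := Real.sqrt_le_sqrt hle
        _ = (Real.sqrt t)⁻¹ := by rw [one_div, Real.sqrt_inv]
    calc (1/t) * (Real.sqrt (Real.pi/(t*Real.pi^2))/2)
        ≤ (1/t) * ((Real.sqrt t)⁻¹/2) :=
          mul_le_mul_of_nonneg_left (by linarith) (by positivity)
      _ = 1/(2*(t*Real.sqrt t)) := by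
          field_simp
  have := main_aux t ht N
    (fun k => (((k:ℝ)+1) * Real.pi) * Real.exp (-t * (((k:ℝ)+1)^2 * Real.pi^2)))
    (fun k => ∫ y in (0:ℝ)..1, (ψ y)^2 * Real.cos (((k:ℝ)+1) * Real.pi * y))
    (∫ y in (0:ℝ)..1, (ψ y)^4) hQ hsupa hSa (by linarith)
  exact this
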